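/- Let a > b > 0 with a² − 2ab − 7b² ≥ 0. Then the nonzero real solutions V1 of the equation aV1² + 2b·(bV1² + ((a+b)/(2b))(V1 − aV1²))² − V1 = 0 are V1 = 1/(a+2b) and V1 = (a + 3b ± √(a² − 2ab − 7b²))/(2(a+2b)(a−b)). -/

import Mathlib

theorem three_spike_roots (a b : ℝ) (hab : a > b) (hb : b > 0)
    (hdisc : a^2 - 2*a*b - 7*b^2 ≥ 0) (V1 : ℝ) (hV1 : V1 ≠ 0) :
    (a*V1^2 + 2*b*(b*V1^2 + ((a+b)/(2*b))*(V1 - a*V1^2))^2 - V1 = 0) ↔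
      (V1 = 1/(a + 2*b) ∨
       V1 = (a + 3*b + Real.sqrt (a^2 - 2*a*b - 7*b^2)) / (2*(a+2*b)*(a-b)) ∨
       V1 = (a + 3*b - Real.sqrt (a^2 - 2*a*b - 7*b^2)) / (2*(a+2*b)*(a-b))) := by
  set s := Real.sqrt (a^2 - 2*a*b - 7*b^2) with hs_def
  have hs : s^2 = a^2 - 2*a*b - 7*b^2 := Real.sq_sqrt hdisc
  have hu : a + 2*b > 0 := by linarith
  have hamb : a - b > 0 := by linarith
  have hb2 : (2*b) ≠ 0 := by positivity
  have hden : 2*(a+2*b)*(a-b) ≠ 0 := by positivity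
  have key : (a*V1^2 + 2*b*(b*V1^2 + ((a+b)/(2*b))*(V1 - a*V1^2))^2 - V1) * (8*b*(a+2*b))
      = V1 * ((a+2*b)*V1 - 1) * ((2*(a+2*b)*(a-b)*V1 - (a+3*b) - s)
        * (2*(a+2*b)*(a-b)*V1 - (a+3*b) + s)) := by
    field_simp
    linear_combination (4*b^2*V1*((a+2*b)*V1-1) + 2*a*V1 + 4*b*V1 + 4*b^2*V1 - 4*a*b^2*V1^2 - 8*b^3*V1^2 - 2) * hs
  have h8 : (8*b*(a+2*b)) ≠ 0 := by positivity
  constructor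
  · intro h
    have hz : V1 * ((a+2*b)*V1 - 1) * ((2*(a+2*b)*(a-b)*V1 - (a+3*b) - s)
        * (2*(a+2*b)*(a-b)*V1 - (a+3*b) + s)) = 0 := by
      rw [← key, h, zero_mul]
    rcases mul_eq_zero.mp hz with h1 | h2
    · rcases mul_eq_zero.mp h1 with h1a | h1b
      · exact absurd h1a hV1
      · left
        field_simp
        linarith [h1b]
    · rcases mul_eq_zero.mp h2 with h2a | h2b
      · right; left
        rw [eq_div_iff hden]
        linarith [h2a]
      · right; right
        rw [eq_div_iff hden]
        linarith [h2b]
  · intro h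
    have hz : V1 * ((a+2*b)*V1 - 1) * ((2*(a+2*b)*(a-b)*V1 - (a+3*b) - s)
        * (2*(a+2*b)*(a-b)*V1 - (a+3*b) + s)) = 0 := by
      rcases h with h | h | h
      · have : (a+2*b)*V1 - 1 = 0 := by
          rw [h]; field_simp; ring
        rw [this]; ring
      · have : 2*(a+2*b)*(a-b)*V1 - (a+3*b) - s = 0 := by
          rw [h]; field_simp; ring
        rw [this]; ring
      · have : 2*(a+2*b)*(a-b)*V1 - (a+3*b) + s = 0 := by
          rw [h]; field_simp; ring
        rw [this]; ring
    have := key.trans hz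
    exact (mul_eq_zero.mp this).resolve_right h8
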